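/- arXiv:1903.01238 — 3 statements merged into one kernel-verified Lean document; each statement's English description precedes it below -/
import Mathlib

section
/- For every y > 0, the quotient exp(−2(τ+1)^{ν(δ)}) / δ^y tends to +∞ as δ → 0⁺. -/
open Real Set Filter

/-- **Lemma 3.1, part (3).** For every `y > 0`,
`exp(-2(τ+1)^{ν(δ)}) / δ^y → ∞` as `δ → 0⁺`, where
`ν(δ) = ln(ln(δ^{-1/k})) / ln(T+1)`. -/
theorem exp_carleman_quotient_tendsto_atTop
    (T k τ : ℝ) (hT : 0 < T) (hk : 0 < k) (hτ : τ ∈ Ioo 0 T)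
    (y : ℝ) (hy : 0 < y) :
    Tendsto
      (fun δ : ℝ =>
        exp (-2 * (τ + 1) ^ (Real.log (Real.log (δ ^ (-(1 / k)))) / Real.log (T + 1))) / δ ^ y)
      (nhdsWithin 0 (Ioi 0)) atTop := by
  obtain ⟨hτ0, hτT⟩ := hτ
  set c : ℝ := Real.log (τ + 1) / Real.log (T + 1) with hc
  have hT1 : (0:ℝ) < Real.log (T + 1) := Real.log_pos (by linarith)
  have hclt : c < 1 := by
    rw [hc, div_lt_one hT1]
    exact Real.log_lt_log (by linarith) (by linarith)
  -- the auxiliary function tends to atTop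
  have hg : Tendsto (fun u : ℝ => y * u - 2 * ((1 / k) * u) ^ c) atTop atTop := by
    have h0 : Tendsto (fun u : ℝ => u ^ (c - 1)) atTop (nhds 0) := by
      have := tendsto_rpow_neg_atTop (y := 1 - c) (by linarith)
      simpa [neg_sub] using this
    have h1 : Tendsto (fun u : ℝ => y - 2 * (1 / k) ^ c * u ^ (c - 1)) atTop (nhds y) := by
      have h2 : Tendsto (fun u : ℝ => 2 * (1 / k) ^ c * u ^ (c - 1)) atTop (nhds 0) := by
        simpa using h0.const_mul (2 * (1 / k) ^ c)
      simpa using tendsto_const_nhds.sub h2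
    have h2 : Tendsto (fun u : ℝ => u * (y - 2 * (1 / k) ^ c * u ^ (c - 1)))
        atTop atTop := Tendsto.atTop_mul_pos hy tendsto_id h1
    refine h2.congr' ?_
    filter_upwards [eventually_gt_atTop (0:ℝ)] with u hu
    have hk0 : (0:ℝ) ≤ 1 / k := by positivity
    rw [Real.mul_rpow hk0 hu.le,
      show c = c - 1 + 1 by ring, Real.rpow_add_one hu.ne']
    ring
  -- -log δ tends to atTop as δ → 0⁺
  have hneg : Tendsto (fun δ : ℝ => -Real.log δ) (nhdsWithin 0 (Ioi 0)) atTop :=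
    tendsto_neg_atBot_atTop.comp Real.tendsto_log_nhdsGT_zero
  have hmain : Tendsto
      (fun δ : ℝ => Real.exp (y * (-Real.log δ) - 2 * ((1 / k) * (-Real.log δ)) ^ c))
      (nhdsWithin 0 (Ioi 0)) atTop :=
    Real.tendsto_exp_atTop.comp (hg.comp hneg)
  refine hmain.congr' ?_
  filter_upwards [Ioo_mem_nhdsGT_of_mem (Set.mem_Ico.2 ⟨le_refl (0:ℝ), one_pos⟩)]
    with δ hδ
  obtain ⟨hδ0, hδ1⟩ := hδ
  have hlogδ : Real.log δ < 0 := Real.log_neg hδ0 hδ1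
  have hL : (0:ℝ) < (1 / k) * (-Real.log δ) :=
    mul_pos (by positivity) (neg_pos.2 hlogδ)
  have hlograw : Real.log (δ ^ (-(1 / k))) = (1 / k) * (-Real.log δ) := by
    rw [Real.log_rpow hδ0]; ring
  have hpow : (τ + 1) ^ (Real.log (Real.log (δ ^ (-(1 / k)))) / Real.log (T + 1))
      = ((1 / k) * (-Real.log δ)) ^ c := by
    rw [hlograw, Real.rpow_def_of_pos (by linarith : (0:ℝ) < τ + 1),
      Real.rpow_def_of_pos hL, hc]
    congr 1
    field_simp
  have hδy : δ ^ y = Real.exp (Real.log δ * y) := Real.rpow_def_of_pos hδ0 y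
  rw [hpow, hδy, ← Real.exp_sub]
  congr 1
  ring
end

section
/- For every y > 0, the product exp(−2(τ+1)^{ν(δ)}) · (ln(1/δ))^y tends to 0 as δ → 0⁺. -/
open Real Set Filter

/-- Auxiliary limit: for `c > 0`, `b > 0`, `exp (-b * u^c) * u^y → 0` as `u → ∞`. -/
lemma aux_exp_neg_rpow_mul_rpow (c b y : ℝ) (hc : 0 < c) (hb : 0 < b) :
    Tendsto (fun u : ℝ => Real.exp (-b * u ^ c) * u ^ y) atTop (nhds 0) := by
  have h1 := tendsto_rpow_mul_exp_neg_mul_atTop_nhds_zero (y / c) b hb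
  have h2 : Tendsto (fun u : ℝ => u ^ c) atTop atTop := tendsto_rpow_atTop hc
  have h3 := h1.comp h2
  refine h3.congr' ?_
  filter_upwards [eventually_gt_atTop (0 : ℝ)] with u hu
  have : ((u ^ c) ^ (y / c)) = u ^ y := by
    rw [← Real.rpow_mul hu.le]
    congr 1
    field_simp
  simp only [Function.comp]
  rw [this]
  ring

/-- **Lemma 3.1, part (4).** For every `y > 0`,
`exp(-2(τ+1)^{ν(δ)}) · (ln(1/δ))^y → 0` as `δ → 0⁺`, where
`ν(δ) = ln(ln(δ^{-1/k})) / ln(T+1)`. -/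
theorem exp_carleman_mul_log_pow_tendsto_zero
    (T k τ : ℝ) (hT : 0 < T) (hk : 0 < k) (hτ : τ ∈ Ioo 0 T)
    (y : ℝ) (hy : 0 < y) :
    Tendsto
      (fun δ : ℝ =>
        exp (-2 * (τ + 1) ^ (Real.log (Real.log (δ ^ (-(1 / k)))) / Real.log (T + 1))) *
          (Real.log (1 / δ)) ^ y)
      (nhdsWithin 0 (Ioi 0)) (nhds 0) := by
  obtain ⟨hτ0, hτT⟩ := hτ
  set c : ℝ := Real.log (τ + 1) / Real.log (T + 1) with hc_def
  have hT1 : (0 : ℝ) < Real.log (T + 1) := Real.log_pos (by linarith)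
  have hτ1 : (0 : ℝ) < Real.log (τ + 1) := Real.log_pos (by linarith)
  have hc : 0 < c := div_pos hτ1 hT1
  have hkc : 0 < k ^ c := Real.rpow_pos_of_pos hk c
  -- the model function
  have hg : Tendsto (fun u : ℝ => Real.exp (-(2 / k ^ c) * u ^ c) * u ^ y) atTop (nhds 0) :=
    aux_exp_neg_rpow_mul_rpow c (2 / k ^ c) y hc (by positivity)
  -- log (1/δ) → atTop as δ → 0⁺
  have hlog : Tendsto (fun δ : ℝ => Real.log (1 / δ)) (nhdsWithin 0 (Ioi 0)) atTop := by
    have := Real.tendsto_log_nhdsGT_zero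
    have hneg : Tendsto (fun δ : ℝ => -Real.log δ) (nhdsWithin 0 (Ioi 0)) atTop :=
      tendsto_neg_atBot_atTop.comp this
    refine hneg.congr' ?_
    filter_upwards [self_mem_nhdsWithin] with δ (hδ : δ ∈ Ioi 0)
    rw [one_div, Real.log_inv]
  have hcomp := hg.comp hlog
  refine hcomp.congr' ?_
  have hmem : Ioo (0 : ℝ) 1 ∈ nhdsWithin (0 : ℝ) (Ioi 0) := by
    rw [mem_nhdsWithin]
    exact ⟨Iio 1, isOpen_Iio, by norm_num, fun x hx => ⟨hx.2, hx.1⟩⟩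
  filter_upwards [hmem] with δ hδ
  obtain ⟨hδ0, hδ1⟩ := hδ
  have hu : 0 < Real.log (1 / δ) := Real.log_pos (by rw [lt_div_iff₀ hδ0]; linarith)
  set u : ℝ := Real.log (1 / δ) with hu_def
  -- log (δ ^ (-(1/k))) = u / k
  have h1 : Real.log (δ ^ (-(1 / k))) = u / k := by
    rw [Real.log_rpow hδ0, hu_def, show (1:ℝ)/δ = δ⁻¹ from one_div δ, Real.log_inv]
    field_simp
  have huk : 0 < u / k := div_pos hu hk
  -- (τ+1) ^ (log (u/k) / log (T+1)) = (u/k) ^ c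
  have h2 : (τ + 1) ^ (Real.log (u / k) / Real.log (T + 1)) = (u / k) ^ c := by
    rw [Real.rpow_def_of_pos (by linarith : (0:ℝ) < τ + 1),
        Real.rpow_def_of_pos huk, hc_def]
    congr 1
    field_simp
  have h3 : (u / k) ^ c = u ^ c / k ^ c := Real.div_rpow hu.le hk.le c
  simp only [Function.comp]
  rw [h1, h2, h3]
  congr 2
  field_simp
  rfl
end

section
/- Assume additionally the ellipticity lower bound: there is μ₁ > 0 with Σ_{i,j=1}^n a_{ij}(x,t) ξ_i ξ_j ≥ μ₁|ξ|² for all (x,t) ∈ U and ξ ∈ ℝⁿ. Then there exist constants C₁, C₂ > 0 and ν₀ > 1, depending only on n, K and μ₁, such that for every ν ≥ ν₀, every function u twice continuously differentiable on U, and every point (x,t) ∈ U with t ≥ 0: (u_t − Lu) u e^{2(t+1)^ν} ≥ C₁ |∇u|² e^{2(t+1)^ν} − C₂ ν (t+1)^{ν−1} u² e^{2(t+1)^ν} + ∂_t( (u²/2) e^{2(t+1)^ν} ) − (1/2) Σ_{i,j=1}^n ∂_{x_j}( a_{ij} u_{x_i} u e^{2(t+1)^ν} ) − (1/2) Σ_{i,j=1}^n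 ∂_{x_i}( a_{ij} u_{x_j} u e^{2(t+1)^ν} ). -/
open Real Set

/-- Partial derivative in time of a function `u(x,t)`. -/
noncomputable def partialT {n : ℕ} (u : (Fin n → ℝ) → ℝ → ℝ) (x : Fin n → ℝ) (t : ℝ) : ℝ :=
  deriv (fun s => u x s) t

/-- Partial derivative in the `i`-th spatial variable of a function `u(x,t)`. -/
noncomputable def partialX {n : ℕ} (i : Fin n) (u : (Fin n → ℝ) → ℝ → ℝ)
    (x : Fin n → ℝ) (t : ℝ) : ℝ :=
  deriv (fun s => u (Function.update x i s) t) (x i)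

/-- The second order operator `(Lu)(x,t) = Σ_{i,j} a_{ij}(x,t) u_{x_i x_j}(x,t)`. -/
noncomputable def Lop {n : ℕ} (a : Fin n → Fin n → (Fin n → ℝ) → ℝ → ℝ)
    (u : (Fin n → ℝ) → ℝ → ℝ) (x : Fin n → ℝ) (t : ℝ) : ℝ :=
  ∑ i, ∑ j, a i j x t * partialX i (partialX j u) x t

set_option maxHeartbeats 1000000 in
/-- **pointwise estimate (2.8).** -/
theorem pointwise_estimate_2_8
    (n : ℕ) (hn : 1 ≤ n)
    (U : Set ((Fin n → ℝ) × ℝ)) (hUopen : IsOpen U) (hUsub : ∀ p ∈ U, (-1:ℝ) < p.2)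
    (a : Fin n → Fin n → (Fin n → ℝ) → ℝ → ℝ) (hsym : ∀ i j, a i j = a j i)
    (ha : ∀ i j, ContDiffOn ℝ 1 (fun p : (Fin n → ℝ) × ℝ => a i j p.1 p.2) U)
    (K : ℝ) (hK : 0 < K)
    (habd : ∀ i j, ∀ p ∈ U, |a i j p.1 p.2| ≤ K)
    (hatbd : ∀ i j, ∀ p ∈ U, |partialT (a i j) p.1 p.2| ≤ K)
    (haxbd : ∀ i j l, ∀ p ∈ U, |partialX l (a i j) p.1 p.2| ≤ K)
    (μ₁ : ℝ) (hμ₁ : 0 < μ₁)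
    (hell : ∀ p ∈ U, ∀ ξ : Fin n → ℝ,
      μ₁ * ∑ i, ξ i ^ 2 ≤ ∑ i, ∑ j, a i j p.1 p.2 * ξ i * ξ j) :
    ∃ C₁ : ℝ, 0 < C₁ ∧ ∃ C₂ : ℝ, 0 < C₂ ∧ ∃ ν₀ : ℝ, 1 < ν₀ ∧
      ∀ ν : ℝ, ν₀ ≤ ν →
      ∀ u : (Fin n → ℝ) → ℝ → ℝ,
        ContDiffOn ℝ 2 (fun p : (Fin n → ℝ) × ℝ => u p.1 p.2) U →
        ∀ p ∈ U, 0 ≤ p.2 →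
          (partialT u p.1 p.2 - Lop a u p.1 p.2) * u p.1 p.2 * exp (2 * (p.2 + 1) ^ ν) ≥
            C₁ * (∑ i, (partialX i u p.1 p.2) ^ 2) * exp (2 * (p.2 + 1) ^ ν)
            - C₂ * ν * (p.2 + 1) ^ (ν - 1) * (u p.1 p.2) ^ 2 * exp (2 * (p.2 + 1) ^ ν)
            + partialT (fun x t => (u x t) ^ 2 / 2 * exp (2 * (t + 1) ^ ν)) p.1 p.2
            - (1 / 2) * ∑ i, ∑ j,
                partialX j (fun x t => a i j x t * partialX i u x t * u x t *
                  exp (2 * (t + 1) ^ ν)) p.1 p.2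
            - (1 / 2) * ∑ i, ∑ j,
                partialX i (fun x t => a i j x t * partialX j u x t * u x t *
                  exp (2 * (t + 1) ^ ν)) p.1 p.2 := by
  refine ⟨μ₁ / 2, by positivity, K ^ 2 * n ^ 3 / μ₁ / 2 + 1, by positivity, 2, one_lt_two, ?_⟩
  intro ν hν u hu p hpU hpt
  obtain ⟨x, t⟩ := p
  simp only at hpt ⊢
  -- basic setup
  set F : (Fin n → ℝ) × ℝ → ℝ := fun q => u q.1 q.2 with hFdef
  have hnhds : U ∈ nhds (x, t) := hUopen.mem_nhds hpU
  have hF2 : ContDiffAt ℝ 2 F (x, t) := hu.contDiffAt hnhds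
  have hFdU : ∀ q ∈ U, DifferentiableAt ℝ F q := fun q hq =>
    (hu.contDiffAt (hUopen.mem_nhds hq)).differentiableAt (by norm_num)
  have hFdp : DifferentiableAt ℝ F (x, t) := hFdU _ hpU
  set e : Fin n → (Fin n → ℝ) × ℝ := fun i => (Pi.single i 1, 0) with hedef
  -- slice lemmas
  have sliceX : ∀ (G : (Fin n → ℝ) × ℝ → ℝ) (l : Fin n) (y : Fin n → ℝ) (τ : ℝ),
      DifferentiableAt ℝ G (y, τ) →
      HasDerivAt (fun s => G (Function.update y l s, τ)) (fderiv ℝ G (y, τ) (e l)) (y l) := by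
    intro G l y τ hG
    have h1 : HasDerivAt (fun s => (Function.update y l s, τ)) (e l) (y l) :=
      HasDerivAt.prodMk (hasDerivAt_update y l (y l)) (hasDerivAt_const (y l) τ)
    have h2 : HasFDerivAt G (fderiv ℝ G (y, τ)) ((fun s => (Function.update y l s, τ)) (y l)) := by
      simpa [Function.update_eq_self] using hG.hasFDerivAt
    exact h2.comp_hasDerivAt (y l) h1
  have sliceT : ∀ (G : (Fin n → ℝ) × ℝ → ℝ) (y : Fin n → ℝ) (τ : ℝ),
      DifferentiableAt ℝ G (y, τ) →
      HasDerivAt (fun s => G (y, s)) (fderiv ℝ G (y, τ) (0, 1)) τ := by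
    intro G y τ hG
    have h1 : HasDerivAt (fun s : ℝ => (y, s)) ((0 : Fin n → ℝ), (1 : ℝ)) τ :=
      HasDerivAt.prodMk (hasDerivAt_const τ y) (hasDerivAt_id τ)
    exact hG.hasFDerivAt.comp_hasDerivAt τ h1
  -- first derivatives of u as fderiv
  have hpXu : ∀ (i : Fin n), ∀ q ∈ U, partialX i u q.1 q.2 = fderiv ℝ F q (e i) := by
    intro i q hq
    have h := sliceX F i q.1 q.2 (by simpa using hFdU q hq)
    exact h.deriv
  have hUslice : ∀ l : Fin n,
      HasDerivAt (fun s => u (Function.update x l s) t) (partialX l u x t) (x l) := by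
    intro l
    have h := sliceX F l x t hFdp
    have hval : partialX l u x t = fderiv ℝ F (x, t) (e l) := h.deriv
    rw [hval]; exact h
  have hUt : HasDerivAt (fun s => u x s) (partialT u x t) t := by
    have h := sliceT F x t hFdp
    have hval : partialT u x t = fderiv ℝ F (x, t) ((0 : Fin n → ℝ), (1 : ℝ)) := h.deriv
    rw [hval]; exact h
  have hAslice : ∀ (i j l : Fin n),
      HasDerivAt (fun s => a i j (Function.update x l s) t) (partialX l (a i j) x t) (x l) := by
    intro i j l
    have hAd : DifferentiableAt ℝ (fun p : (Fin n → ℝ) × ℝ => a i j p.1 p.2) (x, t) :=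
      ((ha i j).contDiffAt hnhds).differentiableAt one_ne_zero
    have h := sliceX (fun p : (Fin n → ℝ) × ℝ => a i j p.1 p.2) l x t hAd
    have hval : partialX l (a i j) x t
        = fderiv ℝ (fun p : (Fin n → ℝ) × ℝ => a i j p.1 p.2) (x, t) (e l) := h.deriv
    rw [hval]; exact h
  -- second derivatives
  set f'' := fderiv ℝ (fderiv ℝ F) (x, t) with hf''def
  have hF1' : ContDiffAt ℝ 1 (fderiv ℝ F) (x, t) := hF2.fderiv_right (by norm_num)
  have hF'd : HasFDerivAt (fderiv ℝ F) f'' (x, t) :=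
    (hF1'.differentiableAt one_ne_zero).hasFDerivAt
  set G : Fin n → ((Fin n → ℝ) × ℝ → ℝ) := fun i q => fderiv ℝ F q (e i) with hGdef
  have hGf : ∀ i, HasFDerivAt (G i)
      ((ContinuousLinearMap.apply ℝ ℝ (e i)).comp f'') (x, t) :=
    fun i => (ContinuousLinearMap.apply ℝ ℝ (e i)).hasFDerivAt.comp (x, t) hF'd
  have hGslice : ∀ i j : Fin n,
      HasDerivAt (fun s => G i (Function.update x j s, t)) (f'' (e j) (e i)) (x j) := by
    intro i j
    have h := sliceX (G i) j x t (hGf i).differentiableAt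
    rwa [(hGf i).fderiv] at h
  have hEv : ∀ i j : Fin n,
      (fun s => partialX i u (Function.update x j s) t)
        =ᶠ[nhds (x j)] (fun s => G i (Function.update x j s, t)) := by
    intro i j
    have hcont : Continuous (fun s : ℝ => ((Function.update x j s : Fin n → ℝ), t)) :=
      by
      have h : Continuous (fun s : ℝ => (Function.update x j s : Fin n → ℝ)) := by
        simpa using (continuous_const.update j continuous_id :
          Continuous fun s : ℝ => Function.update x j (id s))
      exact h.prodMk continuous_const
    have hmem : (((Function.update x j (x j) : Fin n → ℝ)), t) ∈ U := by
      simpa [Function.update_eq_self] using hpU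
    have hev : ∀ᶠ s in nhds (x j), ((Function.update x j s : Fin n → ℝ), t) ∈ U :=
      hcont.continuousAt.preimage_mem_nhds (hUopen.mem_nhds hmem)
    filter_upwards [hev] with s hs
    exact hpXu i _ hs
  have hPXslice : ∀ i j : Fin n,
      HasDerivAt (fun s => partialX i u (Function.update x j s) t) (f'' (e j) (e i)) (x j) :=
    fun i j => (hGslice i j).congr_of_eventuallyEq (hEv i j)
  have hsymH : ∀ i j : Fin n, f'' (e i) (e j) = f'' (e j) (e i) :=
    fun i j => (hF2.isSymmSndFDerivAt (by simp [minSmoothness_of_isRCLikeNormedField])) (e i) (e j)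
  have hHuse : ∀ i j : Fin n, partialX i (partialX j u) x t = f'' (e i) (e j) :=
    fun i j => (hPXslice j i).deriv
  -- time factor
  have ht1 : (0 : ℝ) < t + 1 := by linarith
  have hrpow : HasDerivAt (fun s : ℝ => (s + 1) ^ ν) (ν * (t + 1) ^ (ν - 1)) t := by
    have h1 : HasDerivAt (fun s : ℝ => s + 1) 1 t := (hasDerivAt_id t).add_const 1
    have h2 := Real.hasDerivAt_rpow_const (x := t + 1) (p := ν) (Or.inl (by positivity))
    refine (h2.comp t h1).congr_deriv ?_
    simp
  have hexp : HasDerivAt (fun s : ℝ => exp (2 * (s + 1) ^ ν))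
      (exp (2 * (t + 1) ^ ν) * (2 * (ν * (t + 1) ^ (ν - 1)))) t :=
    (hrpow.const_mul 2).exp
  -- the partialT term
  have hPT : partialT (fun x t => (u x t) ^ 2 / 2 * exp (2 * (t + 1) ^ ν)) x t
      = u x t * partialT u x t * exp (2 * (t + 1) ^ ν)
        + (u x t) ^ 2 * (ν * (t + 1) ^ (ν - 1)) * exp (2 * (t + 1) ^ ν) := by
    have h := ((hUt.pow 2).div_const 2).mul hexp
    have h0 : partialT (fun x t => (u x t) ^ 2 / 2 * exp (2 * (t + 1) ^ ν)) x t
        = deriv (fun s => (u x s) ^ 2 / 2 * exp (2 * (s + 1) ^ ν)) t := rfl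
    rw [h0]; refine h.deriv.trans ?_
    norm_num [Pi.pow_apply] <;> ring
  -- the divergence terms
  have hDgen : ∀ (i j m l : Fin n),
      partialX l (fun y s => a i j y s * partialX m u y s * u y s * exp (2 * (s + 1) ^ ν)) x t
      = (partialX l (a i j) x t * partialX m u x t * u x t
          + a i j x t * f'' (e l) (e m) * u x t
          + a i j x t * partialX m u x t * partialX l u x t) * exp (2 * (t + 1) ^ ν) := by
    intro i j m l
    have h := (((hAslice i j l).mul (hPXslice m l)).mul (hUslice l)).mul_const
      (exp (2 * (t + 1) ^ ν))
    have h0 : partialX l (fun y s => a i j y s * partialX m u y s * u y s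
          * exp (2 * (s + 1) ^ ν)) x t
        = deriv (fun s => a i j (Function.update x l s) t
            * partialX m u (Function.update x l s) t * u (Function.update x l s) t
            * exp (2 * (t + 1) ^ ν)) (x l) := rfl
    rw [h0]; refine h.deriv.trans ?_
    simp only [Pi.mul_apply, Function.update_eq_self]
    ring
  have hDiv1 : ∀ i j : Fin n,
      partialX j (fun x t => a i j x t * partialX i u x t * u x t * exp (2 * (t + 1) ^ ν)) x t
      = (partialX j (a i j) x t * partialX i u x t * u x t
          + a i j x t * f'' (e i) (e j) * u x t
          + a i j x t * partialX i u x t * partialX j u x t) * exp (2 * (t + 1) ^ ν) := by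
    intro i j
    rw [hDgen i j i j, hsymH i j]
  have hDiv2 : ∀ i j : Fin n,
      partialX i (fun x t => a i j x t * partialX j u x t * u x t * exp (2 * (t + 1) ^ ν)) x t
      = (partialX i (a i j) x t * partialX j u x t * u x t
          + a i j x t * f'' (e i) (e j) * u x t
          + a i j x t * partialX i u x t * partialX j u x t) * exp (2 * (t + 1) ^ ν) := by
    intro i j
    rw [hDgen i j j i]
    ring
  rw [ge_iff_le, ← sub_nonneg, hPT]
  simp only [Lop, hHuse, hDiv1, hDiv2]
  simp only [Finset.sum_add_distrib, ← Finset.sum_mul]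
  -- analytic estimates
  have hS1 : (0:ℝ) ≤ ∑ i, partialX i u x t ^ 2 := Finset.sum_nonneg fun i _ => sq_nonneg _
  have hell' : μ₁ * (∑ i, partialX i u x t ^ 2)
      ≤ ∑ i, ∑ j, a i j x t * partialX i u x t * partialX j u x t := by
    simpa using hell (x, t) hpU (fun i => partialX i u x t)
  have hcross : ∀ b c : ℝ, (n : ℝ) * K * (b * c)
      ≤ μ₁ / 4 * b ^ 2 + K ^ 2 * (n : ℝ) ^ 2 / μ₁ * c ^ 2 := by
    intro b c
    rw [← mul_le_mul_iff_right₀ hμ₁]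
    have hID : μ₁ * (μ₁ / 4 * b ^ 2 + K ^ 2 * (n : ℝ) ^ 2 / μ₁ * c ^ 2)
        = μ₁ ^ 2 / 4 * b ^ 2 + K ^ 2 * (n : ℝ) ^ 2 * c ^ 2 := by
      field_simp
    rw [hID]
    nlinarith [sq_nonneg (μ₁ / 2 * b - K * (n : ℝ) * c)]
  have habs : ∀ i : Fin n, |∑ j, partialX j (a i j) x t| ≤ (n : ℝ) * K := by
    intro i
    calc |∑ j, partialX j (a i j) x t| ≤ ∑ j, |partialX j (a i j) x t| :=
          Finset.abs_sum_le_sum_abs _ _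
      _ ≤ ∑ _j : Fin n, K := Finset.sum_le_sum fun j _ => haxbd i j j (x, t) hpU
      _ = (n : ℝ) * K := by rw [Finset.sum_const, Finset.card_univ, Fintype.card_fin,
            nsmul_eq_mul]
  have hT3 : |(∑ i, (∑ j, partialX j (a i j) x t) * partialX i u x t) * u x t|
      ≤ μ₁ / 4 * (∑ i, partialX i u x t ^ 2) + K ^ 2 * (n : ℝ) ^ 3 / μ₁ * (u x t) ^ 2 := by
    rw [Finset.sum_mul]
    refine (Finset.abs_sum_le_sum_abs _ _).trans ?_
    have hstep : ∀ i : Fin n, |(∑ j, partialX j (a i j) x t) * partialX i u x t * u x t|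
        ≤ μ₁ / 4 * partialX i u x t ^ 2 + K ^ 2 * (n : ℝ) ^ 2 / μ₁ * (u x t) ^ 2 := by
      intro i
      have h1 : |(∑ j, partialX j (a i j) x t) * partialX i u x t * u x t|
          = |∑ j, partialX j (a i j) x t| * (|partialX i u x t| * |u x t|) := by
        rw [abs_mul, abs_mul]; ring
      rw [h1]
      have h2 : |∑ j, partialX j (a i j) x t| * (|partialX i u x t| * |u x t|)
          ≤ ((n : ℝ) * K) * (|partialX i u x t| * |u x t|) :=
        mul_le_mul_of_nonneg_right (habs i) (by positivity)
      refine h2.trans ?_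
      have h3 := hcross |partialX i u x t| |u x t|
      rwa [sq_abs, sq_abs] at h3
    refine (Finset.sum_le_sum fun i _ => hstep i).trans ?_
    rw [Finset.sum_add_distrib, ← Finset.mul_sum, Finset.sum_const, Finset.card_univ,
      Fintype.card_fin, nsmul_eq_mul]
    refine le_of_eq ?_
    ring
  have hT4 : |(∑ i, ∑ j, partialX i (a i j) x t * partialX j u x t) * u x t|
      ≤ μ₁ / 4 * (∑ i, partialX i u x t ^ 2) + K ^ 2 * (n : ℝ) ^ 3 / μ₁ * (u x t) ^ 2 := by
    simp only [Finset.sum_mul]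
    refine (Finset.abs_sum_le_sum_abs _ _).trans ?_
    refine ((Finset.sum_le_sum fun i (_ : i ∈ Finset.univ) =>
      Finset.abs_sum_le_sum_abs (fun j => partialX i (a i j) x t * partialX j u x t * u x t)
        Finset.univ)).trans ?_
    have hstep : ∀ i j : Fin n, |partialX i (a i j) x t * partialX j u x t * u x t|
        ≤ K * (|partialX j u x t| * |u x t|) := by
      intro i j
      have h1 : |partialX i (a i j) x t * partialX j u x t * u x t|
          = |partialX i (a i j) x t| * (|partialX j u x t| * |u x t|) := by
        rw [abs_mul, abs_mul]; ring
      rw [h1]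
      exact mul_le_mul_of_nonneg_right (haxbd i j i (x, t) hpU) (by positivity)
    refine (Finset.sum_le_sum fun i _ => Finset.sum_le_sum fun j _ => hstep i j).trans ?_
    rw [Finset.sum_const, Finset.card_univ, Fintype.card_fin, nsmul_eq_mul, Finset.mul_sum]
    have hstep2 : ∀ j : Fin n, (n : ℝ) * (K * (|partialX j u x t| * |u x t|))
        ≤ μ₁ / 4 * partialX j u x t ^ 2 + K ^ 2 * (n : ℝ) ^ 2 / μ₁ * (u x t) ^ 2 := by
      intro j
      have h3 := hcross |partialX j u x t| |u x t|
      rw [sq_abs, sq_abs] at h3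
      linarith [h3]
    refine (Finset.sum_le_sum fun j _ => hstep2 j).trans ?_
    rw [Finset.sum_add_distrib, ← Finset.mul_sum, Finset.sum_const, Finset.card_univ,
      Fintype.card_fin, nsmul_eq_mul]
    refine le_of_eq ?_
    ring
  have hE := Real.exp_pos (2 * (t + 1) ^ ν)
  have hR : 1 ≤ (t + 1) ^ (ν - 1) := Real.one_le_rpow (by linarith) (by linarith)
  have hνR : (2 : ℝ) ≤ ν * (t + 1) ^ (ν - 1) := by nlinarith
  have h3 : K ^ 2 * (n : ℝ) ^ 3 / μ₁ * (u x t) ^ 2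
      ≤ K ^ 2 * (n : ℝ) ^ 3 / μ₁ / 2 * (ν * (t + 1) ^ (ν - 1)) * (u x t) ^ 2 := by
    have h4 : 2 * (u x t) ^ 2 ≤ (ν * (t + 1) ^ (ν - 1)) * (u x t) ^ 2 :=
      mul_le_mul_of_nonneg_right hνR (sq_nonneg _)
    have h5 : (0 : ℝ) ≤ K ^ 2 * (n : ℝ) ^ 3 / μ₁ / 2 := by positivity
    nlinarith [mul_le_mul_of_nonneg_left h4 h5]
  have hcore : 0 ≤ (∑ i, ∑ j, a i j x t * partialX i u x t * partialX j u x t)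
      + (1 / 2) * ((∑ i, (∑ j, partialX j (a i j) x t) * partialX i u x t) * u x t)
      + (1 / 2) * ((∑ i, ∑ j, partialX i (a i j) x t * partialX j u x t) * u x t)
      + (K ^ 2 * (n : ℝ) ^ 3 / μ₁ / 2) * (ν * (t + 1) ^ (ν - 1)) * (u x t) ^ 2
      - μ₁ / 2 * (∑ i, partialX i u x t ^ 2) := by
    have h1 := neg_abs_le ((∑ i, (∑ j, partialX j (a i j) x t) * partialX i u x t) * u x t)
    have h2 := neg_abs_le ((∑ i, ∑ j, partialX i (a i j) x t * partialX j u x t) * u x t)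
    linarith [hT3, hT4, hell', h3, mul_nonneg hμ₁.le hS1]
  linarith [mul_nonneg hcore hE.le]
end
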